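/- arXiv:1703.03404 — 2 statements merged into one kernel-verified Lean document; each statement's English description precedes it below -/
import Mathlib

section
/- Let φ : ℝ^d → ℝ be C² with bounded Hessian, and suppose for some constant C ≥ 0 the remainder bound |∇φ(x) - ∇φ(y) - D²φ(y)(x-y)| ≤ C|x-y|² holds for all x, y. If X, Y : [0,T] → ℝ^d are C² curves and η(t) = ½|X'-Y'|² + φ(X) - φ(Y) - ∇φ(Y)·(X-Y) satisfies η(t) ≥ (r/2)|X-Y|² for some r > 0, then η'(t) ≤ (X'-Y')·(ω_X - ω_Y) + C'·η(t) where ω_Z = Z'' + ∇φ(Z) and C' depends only on C, r and sup|Y'|. -/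
open RealInnerProductSpace InnerProductSpace

/-- Differential inequality for the modulated energy:
`η' ≤ (X'-Y')·(ω_X - ω_Y) + C'·η` on `[0,T]`, with `ω_Z = Z'' + ∇φ(Z)` and `C'`
depending only on the remainder constant `C`, `r` and a bound on `Y'`. -/
theorem stmt5 {d : ℕ} (φ : EuclideanSpace ℝ (Fin d) → ℝ)
    (C r T M : ℝ) (hC : 0 ≤ C) (hr : 0 < r) (hT : 0 < T)
    (hφ : ContDiff ℝ 2 φ)
    (hrem : ∀ x y : EuclideanSpace ℝ (Fin d),
      ‖gradient φ x - gradient φ y - fderiv ℝ (gradient φ) y (x - y)‖ ≤ C * ‖x - y‖ ^ 2)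
    (X Y : ℝ → EuclideanSpace ℝ (Fin d))
    (hX : ContDiff ℝ 2 X) (hY : ContDiff ℝ 2 Y)
    (hY' : ∀ t ∈ Set.Icc (0:ℝ) T, ‖deriv Y t‖ ≤ M)
    (η : ℝ → ℝ)
    (hη : ∀ t, η t = (1 / 2) * ‖deriv X t - deriv Y t‖ ^ 2
      + φ (X t) - φ (Y t) - ⟪gradient φ (Y t), X t - Y t⟫)
    (hlow : ∀ t ∈ Set.Icc (0:ℝ) T, (r / 2) * ‖X t - Y t‖ ^ 2 ≤ η t) :
    ∃ C' : ℝ, 0 ≤ C' ∧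
      (∀ t ∈ Set.Icc (0:ℝ) T,
        deriv η t ≤
          ⟪deriv X t - deriv Y t,
            (deriv (deriv X) t + gradient φ (X t))
              - (deriv (deriv Y) t + gradient φ (Y t))⟫ + C' * η t) := by
  classical
  set G := gradient φ with hGdef
  have hφd : Differentiable ℝ φ := hφ.differentiable two_ne_zero
  let e : StrongDual ℝ (EuclideanSpace ℝ (Fin d)) ≃ₗᵢ[ℝ]
      EuclideanSpace ℝ (Fin d) := (InnerProductSpace.toDual ℝ _).symm
  have he : ∀ (L : StrongDual ℝ (EuclideanSpace ℝ (Fin d)))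
      (v : EuclideanSpace ℝ (Fin d)), ⟪e L, v⟫ = L v :=
    fun L v => InnerProductSpace.toDual_symm_apply
  have hGiso : G = ⇑e ∘ fderiv ℝ φ := rfl
  have hG1 : ContDiff ℝ 1 G := by
    rw [hGiso]
    exact e.contDiff.comp (hφ.fderiv_right (by norm_num))
  have hsymm : ∀ p u v, ⟪fderiv ℝ G p u, v⟫ = ⟪fderiv ℝ G p v, u⟫ := by
    intro p u v
    have h1 : fderiv ℝ G p
        = (e : _ →L[ℝ] _).comp (fderiv ℝ (fderiv ℝ φ) p) := by
      rw [hGiso]; exact e.comp_fderiv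
    have h2 := (hφ.contDiffAt (x := p)).isSymmSndFDerivAt (by simp)
    rw [h1]
    show ⟪e (fderiv ℝ (fderiv ℝ φ) p u), v⟫ = ⟪e (fderiv ℝ (fderiv ℝ φ) p v), u⟫
    rw [he, he]
    exact h2 u v
  have hXdiff : Differentiable ℝ X := hX.differentiable two_ne_zero
  have hYdiff : Differentiable ℝ Y := hY.differentiable two_ne_zero
  have hX1 : ContDiff ℝ 1 (deriv X) := by
    have h := (contDiff_succ_iff_deriv (n := 1)).1 (by exact_mod_cast hX)
    exact h.2.2
  have hY1 : ContDiff ℝ 1 (deriv Y) := by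
    have h := (contDiff_succ_iff_deriv (n := 1)).1 (by exact_mod_cast hY)
    exact h.2.2
  have hXd : ∀ t, HasDerivAt X (deriv X t) t := fun t => (hXdiff t).hasDerivAt
  have hYd : ∀ t, HasDerivAt Y (deriv Y t) t := fun t => (hYdiff t).hasDerivAt
  have hXdd : ∀ t, HasDerivAt (deriv X) (deriv (deriv X) t) t :=
    fun t => (hX1.differentiable one_ne_zero t).hasDerivAt
  have hYdd : ∀ t, HasDerivAt (deriv Y) (deriv (deriv Y) t) t :=
    fun t => (hY1.differentiable one_ne_zero t).hasDerivAt
  have hGda : ∀ p, HasFDerivAt G (fderiv ℝ G p) p :=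
    fun p => (hG1.differentiable one_ne_zero p).hasFDerivAt
  have hφgrad : ∀ p, HasFDerivAt φ (InnerProductSpace.toDual ℝ _ (G p)) p :=
    fun p => (hφd p).hasGradientAt.hasFDerivAt
  have hηfun : η = fun t => (1 / 2) * ⟪deriv X t - deriv Y t, deriv X t - deriv Y t⟫
      + φ (X t) - φ (Y t) - ⟪G (Y t), X t - Y t⟫ := by
    funext t
    rw [hη t, real_inner_self_eq_norm_sq]
  have hder : ∀ t, HasDerivAt η
      ((1 / 2) * (⟪deriv X t - deriv Y t, deriv (deriv X) t - deriv (deriv Y) t⟫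
          + ⟪deriv (deriv X) t - deriv (deriv Y) t, deriv X t - deriv Y t⟫)
        + ⟪G (X t), deriv X t⟫ - ⟪G (Y t), deriv Y t⟫
        - (⟪G (Y t), deriv X t - deriv Y t⟫
            + ⟪(fderiv ℝ G (Y t)) (deriv Y t), X t - Y t⟫)) t := by
    intro t
    rw [hηfun]
    have hD : HasDerivAt (fun t => deriv X t - deriv Y t)
        (deriv (deriv X) t - deriv (deriv Y) t) t := (hXdd t).sub (hYdd t)
    have h1 := hD.inner ℝ hD
    have h2 : HasDerivAt (fun t => φ (X t)) ⟪G (X t), deriv X t⟫ t := by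
      have h := (hφgrad (X t)).comp_hasDerivAt t (hXd t); simp at h; exact h
    have h3 : HasDerivAt (fun t => φ (Y t)) ⟪G (Y t), deriv Y t⟫ t := by
      have h := (hφgrad (Y t)).comp_hasDerivAt t (hYd t); simp at h; exact h
    have hGY : HasDerivAt (fun t => G (Y t)) (fderiv ℝ G (Y t) (deriv Y t)) t :=
      (hGda (Y t)).comp_hasDerivAt t (hYd t)
    have h4 := hGY.inner ℝ ((hXd t).sub (hYd t))
    exact (((h1.const_mul (1 / 2)).add h2).sub h3).sub h4
  have hM : 0 ≤ M := le_trans (norm_nonneg _) (hY' 0 ⟨le_refl 0, le_of_lt hT⟩)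
  refine ⟨2 * C * M / r, by positivity, fun t ht => ?_⟩
  rw [(hder t).deriv]
  have hb : ‖deriv Y t‖ ≤ M := hY' t ht
  have hη0 : 0 ≤ η t := le_trans (by positivity) (hlow t ht)
  have hxy : r * ‖X t - Y t‖ ^ 2 ≤ 2 * η t := by
    have := hlow t ht; nlinarith
  have hsym' := hsymm (Y t) (deriv Y t) (X t - Y t)
  have hcs : ⟪G (X t) - G (Y t) - fderiv ℝ G (Y t) (X t - Y t), deriv Y t⟫
      ≤ C * ‖X t - Y t‖ ^ 2 * M := by
    calc ⟪G (X t) - G (Y t) - fderiv ℝ G (Y t) (X t - Y t), deriv Y t⟫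
        ≤ ‖G (X t) - G (Y t) - fderiv ℝ G (Y t) (X t - Y t)‖ * ‖deriv Y t‖ :=
          real_inner_le_norm _ _
      _ ≤ (C * ‖X t - Y t‖ ^ 2) * M :=
          mul_le_mul (hrem _ _) hb (norm_nonneg _) (by positivity)
  have hfin : C * ‖X t - Y t‖ ^ 2 * M ≤ 2 * C * M / r * η t := by
    rw [div_mul_eq_mul_div, le_div_iff₀ hr]
    nlinarith [mul_le_mul_of_nonneg_left hxy (mul_nonneg hC hM)]
  have c1 := real_inner_comm (deriv (deriv X) t - deriv (deriv Y) t) (deriv X t - deriv Y t)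
  have c2 := real_inner_comm (G (X t)) (deriv X t)
  have c3 := real_inner_comm (G (X t)) (deriv Y t)
  have c4 := real_inner_comm (G (Y t)) (deriv X t)
  have c5 := real_inner_comm (G (Y t)) (deriv Y t)
  simp only [inner_sub_left, inner_sub_right, inner_add_left, inner_add_right,
    map_sub] at hsym' hcs c1 ⊢
  linarith
end

section
/- Suppose φ : ℝ^d → ℝ is C² with r·I ≤ D²φ ≤ r⁻¹·I (0 < r < 1/2) and bounded third derivatives. Let X solve X'' = -∇φ(X) with X(0) = x₀, X'(0) = 0, and let Z solve Z' = -∇φ(Z) with Z(0) = x₀. Then for every T > 0 there exists C (depending on T, φ, Z) such that |X(t) - Z(t²/2)|² + |X'(t) - t·Z'(t²/2)|² ≤ C·t⁵ for all t ∈ [0,T]. -/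
set_option maxHeartbeats 1000000

open RealInnerProductSpace Set intervalIntegral Metric

lemma aux_int {E : Type*} [NormedAddCommGroup E] [NormedSpace ℝ E] [CompleteSpace E]
    (f f' : ℝ → E) (c : ℝ) (hcnn : 0 ≤ c) (n : ℕ) (t : ℝ) (ht : 0 ≤ t)
    (hd : ∀ s ∈ Set.Icc (0:ℝ) t, HasDerivAt f (f' s) s)
    (hc : ContinuousOn f' (Set.Icc (0:ℝ) t))
    (hb : ∀ s ∈ Set.Icc (0:ℝ) t, ‖f' s‖ ≤ c * s ^ n)
    (h0 : f 0 = 0) :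
    ‖f t‖ ≤ c * t ^ (n+1) / (n+1) := by
  have huIcc : Set.uIcc (0:ℝ) t = Set.Icc 0 t := Set.uIcc_of_le ht
  have hint : IntervalIntegrable f' MeasureTheory.volume 0 t :=
    (hc.mono (by rw [huIcc])).intervalIntegrable
  have heq : ∫ s in (0:ℝ)..t, f' s = f t - f 0 :=
    integral_eq_sub_of_hasDerivAt (fun s hs => hd s (by rwa [huIcc] at hs)) hint
  have hgint : IntervalIntegrable (fun s => c * s ^ n) MeasureTheory.volume 0 t :=
    Continuous.intervalIntegrable (by continuity) 0 t
  have hnorm : ‖∫ s in (0:ℝ)..t, f' s‖ ≤ |∫ s in (0:ℝ)..t, c * s ^ n| := by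
    apply norm_integral_le_abs_of_norm_le _ hgint
    filter_upwards [MeasureTheory.ae_restrict_mem measurableSet_uIoc] with s hs
    exact hb s (Set.mem_Icc_of_Ioc (by rwa [Set.uIoc_of_le ht] at hs))
  have hval : ∫ s in (0:ℝ)..t, c * s ^ n = c * t ^ (n+1) / (n+1) := by
    rw [intervalIntegral.integral_const_mul, integral_pow]
    ring
  rw [heq, h0, sub_zero] at hnorm
  rw [hval] at hnorm
  refine hnorm.trans ?_
  rw [abs_div, abs_mul]
  have h1 : |t ^ (n+1)| = t ^ (n+1) := abs_of_nonneg (pow_nonneg ht _)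
  have h2 : |((n:ℝ)+1)| = (n:ℝ)+1 := abs_of_nonneg (by positivity)
  rw [h1, h2, abs_of_nonneg hcnn]

/-- Comparison of Newton's flow (zero initial velocity) with the gradient flow under the
quadratic change of time: `|X(t)-Z(t²/2)|² + |X'(t) - t Z'(t²/2)|² ≤ C t⁵` on `[0,T]`. -/
theorem stmt6 {d : ℕ} (φ : EuclideanSpace ℝ (Fin d) → ℝ) (r M : ℝ)
    (hr0 : 0 < r) (hr : r < 1 / 2)
    (hφ : ContDiff ℝ 3 φ)
    (hess_lb : ∀ x v : EuclideanSpace ℝ (Fin d),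
      r * ‖v‖ ^ 2 ≤ ⟪fderiv ℝ (gradient φ) x v, v⟫)
    (hess_ub : ∀ x v : EuclideanSpace ℝ (Fin d),
      ⟪fderiv ℝ (gradient φ) x v, v⟫ ≤ r⁻¹ * ‖v‖ ^ 2)
    (h3 : ∀ x, ‖iteratedFDeriv ℝ 3 φ x‖ ≤ M)
    (x₀ : EuclideanSpace ℝ (Fin d))
    (X Z : ℝ → EuclideanSpace ℝ (Fin d))
    (hX : ContDiff ℝ 2 X) (hZ : ContDiff ℝ 1 Z)
    (hXeq : ∀ t, deriv (deriv X) t = -gradient φ (X t))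
    (hX0 : X 0 = x₀) (hX'0 : deriv X 0 = 0)
    (hZeq : ∀ θ, deriv Z θ = -gradient φ (Z θ)) (hZ0 : Z 0 = x₀) :
    ∀ T > (0:ℝ), ∃ C : ℝ, ∀ t ∈ Set.Icc (0:ℝ) T,
      ‖X t - Z (t ^ 2 / 2)‖ ^ 2 + ‖deriv X t - t • deriv Z (t ^ 2 / 2)‖ ^ 2
        ≤ C * t ^ 5 := by
  intro T hT
  -- smoothness of the gradient
  have hgrad : ContDiff ℝ 2 (gradient φ) := by
    have h : gradient φ = fun x =>
        (InnerProductSpace.toDual ℝ (EuclideanSpace ℝ (Fin d))).symm (fderiv ℝ φ x) := rfl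
    rw [h]
    exact (InnerProductSpace.toDual ℝ _).symm.contDiff.comp
      (hφ.fderiv_right (by norm_num))
  have hgd : Differentiable ℝ (gradient φ) := hgrad.differentiable (by norm_num)
  have hgc : Continuous (gradient φ) := hgrad.continuous
  have hHcont : Continuous (fderiv ℝ (gradient φ)) :=
    (hgrad.fderiv_right (by norm_num : (1:WithTop ℕ∞) + 1 ≤ 2)).continuous
  -- facts about X
  have hXd : Differentiable ℝ X := hX.differentiable (by norm_num)
  have hXc : Continuous X := hX.continuous
  have hX1 : ContDiff ℝ 1 (deriv X) := by
    have h2 : (2 : WithTop ℕ∞) = 1 + 1 := by norm_num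
    rw [h2] at hX
    exact (contDiff_succ_iff_deriv.mp hX).2.2
  have hX'd : Differentiable ℝ (deriv X) := hX1.differentiable one_ne_zero
  have hX'c : Continuous (deriv X) := hX1.continuous
  have hX''at : ∀ t, HasDerivAt (deriv X) (-gradient φ (X t)) t :=
    fun t => hXeq t ▸ (hX'd t).hasDerivAt
  -- facts about Z
  have hZd : Differentiable ℝ Z := hZ.differentiable one_ne_zero
  have hZc : Continuous Z := hZ.continuous
  have hZat : ∀ θ, HasDerivAt Z (-gradient φ (Z θ)) θ :=
    fun θ => hZeq θ ▸ (hZd θ).hasDerivAt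
  -- the time-changed gradient flow
  set W : ℝ → EuclideanSpace ℝ (Fin d) := fun t => Z (t ^ 2 / 2) with hWdef
  have hWc : Continuous W := hZc.comp (by continuity)
  have hqat : ∀ t : ℝ, HasDerivAt (fun s : ℝ => s ^ 2 / 2) t t := by
    intro t
    have := (hasDerivAt_pow 2 t).div_const 2
    refine this.congr_deriv ?_
    simp
  have hWat : ∀ t, HasDerivAt W (t • (-gradient φ (W t))) t := by
    intro t
    exact (hZat (t ^ 2 / 2)).scomp t (hqat t)
  -- F and G
  set F : ℝ → EuclideanSpace ℝ (Fin d) := fun t => X t - W t with hFdef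
  set G : ℝ → EuclideanSpace ℝ (Fin d) := fun t => deriv X t + t • gradient φ (W t)
    with hGdef
  have hGsub : ∀ t, G t = deriv X t - t • deriv Z (t ^ 2 / 2) := by
    intro t
    simp only [hGdef, hZeq, smul_neg, sub_neg_eq_add]
    rfl
  have hF0 : F 0 = 0 := by simp [hFdef, hWdef, hX0, hZ0]
  have hG0 : G 0 = 0 := by simp [hGdef, hX'0]
  have hFc : Continuous F := hXc.sub hWc
  have hGc : Continuous G := by
    apply hX'c.add
    exact (continuous_id.smul (hgc.comp hWc))
  have hFat : ∀ t, HasDerivAt F (G t) t := by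
    intro t
    have h := ((hXd t).hasDerivAt).sub (hWat t)
    refine h.congr_deriv ?_
    simp [hGdef, smul_neg]
  -- derivative of G
  set Gd : ℝ → EuclideanSpace ℝ (Fin d) := fun t =>
    (gradient φ (W t) - gradient φ (X t))
      + (t ^ 2) • (fderiv ℝ (gradient φ) (W t)) (-gradient φ (W t)) with hGddef
  have hGat : ∀ t, HasDerivAt G (Gd t) t := by
    intro t
    have hinner : HasDerivAt (fun s => gradient φ (W s))
        ((fderiv ℝ (gradient φ) (W t)) (t • (-gradient φ (W t)))) t :=
      (hgd (W t)).hasFDerivAt.comp_hasDerivAt t (hWat t)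
    have hsmul : HasDerivAt (fun s : ℝ => s • gradient φ (W s))
        (t • ((fderiv ℝ (gradient φ) (W t)) (t • (-gradient φ (W t))))
          + (1:ℝ) • gradient φ (W t)) t :=
      (hasDerivAt_id t).smul hinner
    have h := (hX''at t).add hsmul
    refine h.congr_deriv ?_
    simp only [hGddef, map_smul, one_smul, smul_smul]
    module
  have hGdc : Continuous Gd := by
    apply Continuous.add
    · exact (hgc.comp hWc).sub (hgc.comp hXc)
    · exact (continuous_pow 2).smul
        (Continuous.clm_apply (hHcont.comp hWc) ((hgc.comp hWc).neg))
  -- compact range and constants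
  have hIcc : IsCompact (Set.Icc (0:ℝ) T) := isCompact_Icc
  have hSX : IsCompact (X '' Set.Icc 0 T) := hIcc.image hXc
  have hSW : IsCompact (W '' Set.Icc 0 T) := hIcc.image hWc
  obtain ⟨R, hR⟩ := ((hSX.union hSW).isBounded).subset_closedBall (0 : EuclideanSpace ℝ (Fin d))
  have hXmem : ∀ t ∈ Set.Icc (0:ℝ) T, X t ∈ closedBall (0:EuclideanSpace ℝ (Fin d)) R :=
    fun t ht => hR (Or.inl ⟨t, ht, rfl⟩)
  have hWmem : ∀ t ∈ Set.Icc (0:ℝ) T, W t ∈ closedBall (0:EuclideanSpace ℝ (Fin d)) R :=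
    fun t ht => hR (Or.inr ⟨t, ht, rfl⟩)
  have hball : IsCompact (closedBall (0:EuclideanSpace ℝ (Fin d)) R) := isCompact_closedBall _ _
  obtain ⟨L0, hL0⟩ := hball.exists_bound_of_continuousOn (hHcont.continuousOn)
  obtain ⟨K0, hK0⟩ := hball.exists_bound_of_continuousOn (hgc.continuousOn)
  set L := max L0 0 with hLdef
  set K := max K0 0 with hKdef
  have hLnn : 0 ≤ L := le_max_right _ _
  have hKnn : 0 ≤ K := le_max_right _ _
  have hLb : ∀ x ∈ closedBall (0:EuclideanSpace ℝ (Fin d)) R,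
      ‖fderiv ℝ (gradient φ) x‖ ≤ L := fun x hx => (hL0 x hx).trans (le_max_left _ _)
  have hKb : ∀ x ∈ closedBall (0:EuclideanSpace ℝ (Fin d)) R,
      ‖gradient φ x‖ ≤ K := fun x hx => (hK0 x hx).trans (le_max_left _ _)
  have hLip : ∀ x ∈ closedBall (0:EuclideanSpace ℝ (Fin d)) R,
      ∀ y ∈ closedBall (0:EuclideanSpace ℝ (Fin d)) R,
      ‖gradient φ y - gradient φ x‖ ≤ L * ‖y - x‖ := by
    intro x hx y hy
    exact (convex_closedBall _ _).norm_image_sub_le_of_norm_fderiv_le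
      (fun z _ => hgd z) hLb hx hy
  -- crude bound on F
  obtain ⟨C₀', hC₀'⟩ := hIcc.exists_bound_of_continuousOn (hFc.comp continuous_id).continuousOn
  set C₀ := max C₀' 0 with hC₀def
  have hC₀nn : 0 ≤ C₀ := le_max_right _ _
  have hC₀ : ∀ t ∈ Set.Icc (0:ℝ) T, ‖F t‖ ≤ C₀ :=
    fun t ht => (hC₀' t ht).trans (le_max_left _ _)
  -- bound on Gd
  have hGdb : ∀ t ∈ Set.Icc (0:ℝ) T, ‖Gd t‖ ≤ L * ‖F t‖ + K * L * t ^ 2 := by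
    intro t ht
    have h1 : ‖gradient φ (W t) - gradient φ (X t)‖ ≤ L * ‖F t‖ := by
      have := hLip (X t) (hXmem t ht) (W t) (hWmem t ht)
      calc ‖gradient φ (W t) - gradient φ (X t)‖ ≤ L * ‖W t - X t‖ := this
        _ = L * ‖F t‖ := by rw [norm_sub_rev]
    have h2 : ‖(t ^ 2) • (fderiv ℝ (gradient φ) (W t)) (-gradient φ (W t))‖
        ≤ K * L * t ^ 2 := by
      rw [norm_smul]
      have hop : ‖(fderiv ℝ (gradient φ) (W t)) (-gradient φ (W t))‖ ≤ L * K := by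
        calc ‖(fderiv ℝ (gradient φ) (W t)) (-gradient φ (W t))‖
            ≤ ‖fderiv ℝ (gradient φ) (W t)‖ * ‖-gradient φ (W t)‖ :=
              (fderiv ℝ (gradient φ) (W t)).le_opNorm _
          _ ≤ L * K := by
              rw [norm_neg]
              exact mul_le_mul (hLb _ (hWmem t ht)) (hKb _ (hWmem t ht))
                (norm_nonneg _) hLnn
      have ht2 : ‖(t:ℝ) ^ 2‖ = t ^ 2 := by
        rw [Real.norm_eq_abs]; exact abs_of_nonneg (by positivity)
      rw [ht2]
      calc t ^ 2 * ‖(fderiv ℝ (gradient φ) (W t)) (-gradient φ (W t))‖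
          ≤ t ^ 2 * (L * K) := by
            apply mul_le_mul_of_nonneg_left hop (by positivity)
        _ = K * L * t ^ 2 := by ring
    calc ‖Gd t‖ ≤ ‖gradient φ (W t) - gradient φ (X t)‖
          + ‖(t ^ 2) • (fderiv ℝ (gradient φ) (W t)) (-gradient φ (W t))‖ := norm_add_le _ _
      _ ≤ L * ‖F t‖ + K * L * t ^ 2 := add_le_add h1 h2
  -- iteration 1: ‖G t‖ ≤ a₁ t
  set a₁ := L * C₀ + K * L * T ^ 2 with ha₁def
  have ha₁nn : 0 ≤ a₁ := by positivity
  have hg1 : ∀ t ∈ Set.Icc (0:ℝ) T, ‖G t‖ ≤ a₁ * t := by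
    intro t ht
    have := aux_int G Gd a₁ ha₁nn 0 t ht.1 (fun s _ => hGat s)
      hGdc.continuousOn
      (fun s hs => by
        have hsT : s ∈ Set.Icc (0:ℝ) T := ⟨hs.1, hs.2.trans ht.2⟩
        have := hGdb s hsT
        have hFb := hC₀ s hsT
        have hs2 : s ^ 2 ≤ T ^ 2 := by nlinarith [hs.1, hsT.2, hT.le]
        calc ‖Gd s‖ ≤ L * ‖F s‖ + K * L * s ^ 2 := hGdb s hsT
          _ ≤ L * C₀ + K * L * T ^ 2 := by
              apply add_le_add
              · exact mul_le_mul_of_nonneg_left hFb hLnn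
              · exact mul_le_mul_of_nonneg_left hs2 (by positivity)
          _ = a₁ * s ^ 0 := by simp [ha₁def]) hG0
    simpa using this
  -- iteration 1': ‖F t‖ ≤ a₁ t²/2
  have hf1 : ∀ t ∈ Set.Icc (0:ℝ) T, ‖F t‖ ≤ a₁ * t ^ 2 / 2 := by
    intro t ht
    have := aux_int F G a₁ ha₁nn 1 t ht.1 (fun s _ => hFat s)
      hGc.continuousOn
      (fun s hs => by simpa using hg1 s ⟨hs.1, hs.2.trans ht.2⟩) hF0
    refine this.trans (le_of_eq ?_)
    norm_num
  -- iteration 2: ‖G t‖ ≤ a₂ t³/3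
  set a₂ := L * a₁ / 2 + K * L with ha₂def
  have ha₂nn : 0 ≤ a₂ := by positivity
  have hg2 : ∀ t ∈ Set.Icc (0:ℝ) T, ‖G t‖ ≤ a₂ * t ^ 3 / 3 := by
    intro t ht
    have := aux_int G Gd a₂ ha₂nn 2 t ht.1 (fun s _ => hGat s)
      hGdc.continuousOn
      (fun s hs => by
        have hsT : s ∈ Set.Icc (0:ℝ) T := ⟨hs.1, hs.2.trans ht.2⟩
        calc ‖Gd s‖ ≤ L * ‖F s‖ + K * L * s ^ 2 := hGdb s hsT
          _ ≤ L * (a₁ * s ^ 2 / 2) + K * L * s ^ 2 := by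
              apply add_le_add_left
              exact mul_le_mul_of_nonneg_left (hf1 s hsT) hLnn
          _ = a₂ * s ^ 2 := by rw [ha₂def]; ring) hG0
    refine this.trans (le_of_eq ?_)
    push_cast
    ring
  -- iteration 2': ‖F t‖ ≤ (a₂/3) t⁴/4
  have hf2 : ∀ t ∈ Set.Icc (0:ℝ) T, ‖F t‖ ≤ a₂ * t ^ 4 / 12 := by
    intro t ht
    have := aux_int F G (a₂ / 3) (by positivity) 3 t ht.1 (fun s _ => hFat s)
      hGc.continuousOn
      (fun s hs => by
        have := hg2 s ⟨hs.1, hs.2.trans ht.2⟩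
        calc ‖G s‖ ≤ a₂ * s ^ 3 / 3 := this
          _ = a₂ / 3 * s ^ 3 := by ring) hF0
    refine this.trans (le_of_eq ?_)
    push_cast
    ring
  -- conclusion
  refine ⟨(a₂ / 12) ^ 2 * T ^ 3 + (a₂ / 3) ^ 2 * T, ?_⟩
  intro t ht
  have hFt : ‖F t‖ ≤ a₂ / 12 * t ^ 4 := by
    have := hf2 t ht
    calc ‖F t‖ ≤ a₂ * t ^ 4 / 12 := this
      _ = a₂ / 12 * t ^ 4 := by ring
  have hGt : ‖G t‖ ≤ a₂ / 3 * t ^ 3 := by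
    have := hg2 t ht
    calc ‖G t‖ ≤ a₂ * t ^ 3 / 3 := this
      _ = a₂ / 3 * t ^ 3 := by ring
  have hF2 : ‖F t‖ ^ 2 ≤ (a₂ / 12 * t ^ 4) ^ 2 :=
    pow_le_pow_left₀ (norm_nonneg _) hFt 2
  have hG2 : ‖G t‖ ^ 2 ≤ (a₂ / 3 * t ^ 3) ^ 2 :=
    pow_le_pow_left₀ (norm_nonneg _) hGt 2
  have hgoalF : (a₂ / 12 * t ^ 4) ^ 2 ≤ (a₂ / 12) ^ 2 * T ^ 3 * t ^ 5 := by
    have h8 : t ^ 8 ≤ T ^ 3 * t ^ 5 := by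
      have h3 : t ^ 3 ≤ T ^ 3 := pow_le_pow_left₀ ht.1 ht.2 3
      calc t ^ 8 = t ^ 3 * t ^ 5 := by ring
        _ ≤ T ^ 3 * t ^ 5 := mul_le_mul_of_nonneg_right h3 (pow_nonneg ht.1 5)
    calc (a₂ / 12 * t ^ 4) ^ 2 = (a₂ / 12) ^ 2 * t ^ 8 := by ring
      _ ≤ (a₂ / 12) ^ 2 * (T ^ 3 * t ^ 5) := mul_le_mul_of_nonneg_left h8 (by positivity)
      _ = (a₂ / 12) ^ 2 * T ^ 3 * t ^ 5 := by ring
  have hgoalG : (a₂ / 3 * t ^ 3) ^ 2 ≤ (a₂ / 3) ^ 2 * T * t ^ 5 := by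
    have h6 : t ^ 6 ≤ T * t ^ 5 := by
      calc t ^ 6 = t * t ^ 5 := by ring
        _ ≤ T * t ^ 5 := mul_le_mul_of_nonneg_right ht.2 (pow_nonneg ht.1 5)
    calc (a₂ / 3 * t ^ 3) ^ 2 = (a₂ / 3) ^ 2 * t ^ 6 := by ring
      _ ≤ (a₂ / 3) ^ 2 * (T * t ^ 5) := mul_le_mul_of_nonneg_left h6 (by positivity)
      _ = (a₂ / 3) ^ 2 * T * t ^ 5 := by ring
  have hXW : X t - Z (t ^ 2 / 2) = F t := rfl
  have hXG : deriv X t - t • deriv Z (t ^ 2 / 2) = G t := (hGsub t).symm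
  rw [hXW, hXG]
  calc ‖F t‖ ^ 2 + ‖G t‖ ^ 2
      ≤ (a₂ / 12 * t ^ 4) ^ 2 + (a₂ / 3 * t ^ 3) ^ 2 := add_le_add hF2 hG2
    _ ≤ (a₂ / 12) ^ 2 * T ^ 3 * t ^ 5 + (a₂ / 3) ^ 2 * T * t ^ 5 := add_le_add hgoalF hgoalG
    _ = ((a₂ / 12) ^ 2 * T ^ 3 + (a₂ / 3) ^ 2 * T) * t ^ 5 := by ring
end
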